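/- Let S be a finite non-nested set of intervals with |S| = k. Then S equals the set of pairs (d_(i), a_(i)) for 1 ≤ i ≤ k, where d_(i) denotes the i-th smallest departure of S and a_(i) denotes the i-th smallest arrival of S; that is, pairing the sorted list of departures with the sorted list of arrivals recovers exactly the members of S. -/

import Mathlib

/-- An interval `I = (d, a)` is contained in `I' = (d', a')` if `d' ≤ d` and `a ≤ a'`. -/
def Contained (I I' : ℕ × ℕ) : Prop := I'.1 ≤ I.1 ∧ I.2 ≤ I'.2

/-- A finite set of intervals is non-nested if no member is contained in a distinct member. -/
def NonNested (S : Finset (ℕ × ℕ)) : Prop :=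
  ∀ I ∈ S, ∀ I' ∈ S, I ≠ I' → ¬ Contained I I' ∧ ¬ Contained I' I

/-- The `i`-th smallest element (1-indexed) of a finite set of naturals. -/
def nthSmallest (T : Finset ℕ) (i : ℕ) : ℕ := (T.sort (· ≤ ·)).getD (i - 1) 0

lemma sort_insert_max (a : ℕ) (s : Finset ℕ) (h₁ : ∀ b ∈ s, b ≤ a) (h₂ : a ∉ s) :
    (insert a s).sort (· ≤ ·) = s.sort (· ≤ ·) ++ [a] := by
  refine (fun h1 h2 h3 => List.Perm.eq_of_pairwise' (r := (· ≤ ·)) h2 h3 h1) ?_ ?_ ?_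
  · rw [← Multiset.coe_eq_coe, Finset.sort_eq, Finset.insert_val_of_notMem h₂,
      ← Multiset.coe_add, Finset.sort_eq, Multiset.coe_singleton, add_comm,
      Multiset.singleton_add]
  · exact Finset.pairwise_sort _ _
  · refine List.pairwise_append.2 ⟨Finset.pairwise_sort _ _, List.pairwise_singleton _ _, ?_⟩
    intro x hx y hy
    simp at hy
    subst hy
    exact h₁ x ((Finset.mem_sort _).1 hx)

lemma nonNested_aux : ∀ S : Finset (ℕ × ℕ), NonNested S →
    S = (Finset.Icc 1 S.card).image
      (fun i => (nthSmallest (S.image Prod.fst) i, nthSmallest (S.image Prod.snd) i)) := by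
  intro S
  induction S using Finset.strongInduction with
  | _ S ih =>
    intro hnn
    rcases S.eq_empty_or_nonempty with rfl | hne
    · simp
    obtain ⟨I₀, hI₀, hmax⟩ := S.exists_max_image Prod.fst hne
    -- strict bounds
    have hstrict : ∀ I ∈ S, I ≠ I₀ → I.1 < I₀.1 ∧ I.2 < I₀.2 := by
      intro I hI hne'
      obtain ⟨h1, h2⟩ := hnn I hI I₀ hI₀ hne'
      constructor
      · rcases lt_or_eq_of_le (hmax I hI) with h | h
        · exact h
        · exact absurd ⟨le_of_eq h.symm, le_of_not_gt fun hc =>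
            h2 ⟨hmax I hI, le_of_lt hc⟩⟩ h1
      · by_contra hc
        exact h2 ⟨hmax I hI, le_of_not_gt hc⟩
    set S' := S.erase I₀ with hS'
    have hIS' : I₀ ∉ S' := Finset.notMem_erase _ _
    have hins : S = insert I₀ S' := (Finset.insert_erase hI₀).symm
    have hnn' : NonNested S' := fun I hI I' hI' h =>
      hnn I (Finset.mem_of_mem_erase hI) I' (Finset.mem_of_mem_erase hI') h
    have hcard : S.card = S'.card + 1 := (Finset.card_erase_add_one hI₀).symm
    -- injectivity of fst and snd on S
    have hinjf : Set.InjOn Prod.fst (S : Set (ℕ × ℕ)) := by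
      intro I hI I' hI' h
      by_contra hne'
      obtain ⟨h1, h2⟩ := hnn I hI I' hI' hne'
      rcases le_total I.2 I'.2 with hc | hc
      · exact h1 ⟨h.ge, hc⟩
      · exact h2 ⟨h.le, hc⟩
    have hinjs : Set.InjOn Prod.snd (S : Set (ℕ × ℕ)) := by
      intro I hI I' hI' h
      by_contra hne'
      obtain ⟨h1, h2⟩ := hnn I hI I' hI' hne'
      rcases le_total I.1 I'.1 with hc | hc
      · exact h2 ⟨hc, h.ge⟩
      · exact h1 ⟨hc, h.le⟩
    have hsubS' : (S' : Set (ℕ × ℕ)) ⊆ (S : Set (ℕ × ℕ)) := by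
      intro x hx; exact Finset.mem_of_mem_erase hx
    -- images
    have hf1 : S.image Prod.fst = insert I₀.1 (S'.image Prod.fst) := by
      rw [hins, Finset.image_insert]
    have hf2 : S.image Prod.snd = insert I₀.2 (S'.image Prod.snd) := by
      rw [hins, Finset.image_insert]
    have hnm1 : I₀.1 ∉ S'.image Prod.fst := by
      simp only [Finset.mem_image, not_exists]
      rintro I ⟨hI, hEq⟩
      exact absurd hEq (ne_of_lt (hstrict I (Finset.mem_of_mem_erase hI)
        (Finset.ne_of_mem_erase hI)).1)
    have hnm2 : I₀.2 ∉ S'.image Prod.snd := by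
      simp only [Finset.mem_image, not_exists]
      rintro I ⟨hI, hEq⟩
      exact absurd hEq (ne_of_lt (hstrict I (Finset.mem_of_mem_erase hI)
        (Finset.ne_of_mem_erase hI)).2)
    have hsort1 : (S.image Prod.fst).sort (· ≤ ·)
        = (S'.image Prod.fst).sort (· ≤ ·) ++ [I₀.1] := by
      rw [hf1]
      apply sort_insert_max _ _ _ hnm1
      intro b hb
      obtain ⟨I, hI, rfl⟩ := Finset.mem_image.1 hb
      exact le_of_lt (hstrict I (Finset.mem_of_mem_erase hI) (Finset.ne_of_mem_erase hI)).1
    have hsort2 : (S.image Prod.snd).sort (· ≤ ·)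
        = (S'.image Prod.snd).sort (· ≤ ·) ++ [I₀.2] := by
      rw [hf2]
      apply sort_insert_max _ _ _ hnm2
      intro b hb
      obtain ⟨I, hI, rfl⟩ := Finset.mem_image.1 hb
      exact le_of_lt (hstrict I (Finset.mem_of_mem_erase hI) (Finset.ne_of_mem_erase hI)).2
    have hlen1 : ((S'.image Prod.fst).sort (· ≤ ·)).length = S'.card := by
      rw [Finset.length_sort, Finset.card_image_of_injOn (hinjf.mono hsubS')]
    have hlen2 : ((S'.image Prod.snd).sort (· ≤ ·)).length = S'.card := by
      rw [Finset.length_sort, Finset.card_image_of_injOn (hinjs.mono hsubS')]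
    -- nthSmallest facts
    have hnth1 : ∀ i ∈ Finset.Icc 1 S'.card,
        nthSmallest (S.image Prod.fst) i = nthSmallest (S'.image Prod.fst) i := by
      intro i hi
      obtain ⟨hi1, hi2⟩ := Finset.mem_Icc.1 hi
      unfold nthSmallest
      rw [hsort1, List.getD_append]
      omega
    have hnth2 : ∀ i ∈ Finset.Icc 1 S'.card,
        nthSmallest (S.image Prod.snd) i = nthSmallest (S'.image Prod.snd) i := by
      intro i hi
      obtain ⟨hi1, hi2⟩ := Finset.mem_Icc.1 hi
      unfold nthSmallest
      rw [hsort2, List.getD_append]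
      omega
    have hlast1 : nthSmallest (S.image Prod.fst) (S'.card + 1) = I₀.1 := by
      unfold nthSmallest
      rw [hsort1, List.getD_append_right]
      · simp [hlen1]
      · omega
    have hlast2 : nthSmallest (S.image Prod.snd) (S'.card + 1) = I₀.2 := by
      unfold nthSmallest
      rw [hsort2, List.getD_append_right]
      · simp [hlen2]
      · omega
    -- assemble
    have hIcc : Finset.Icc 1 S.card = insert (S'.card + 1) (Finset.Icc 1 S'.card) := by
      rw [hcard]
      ext x
      simp [Finset.mem_Icc]
      omega
    rw [hIcc, Finset.image_insert, hlast1, hlast2, Prod.mk.eta]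
    have hrest : (Finset.Icc 1 S'.card).image
        (fun i => (nthSmallest (S.image Prod.fst) i, nthSmallest (S.image Prod.snd) i)) = S' := by
      rw [Finset.image_congr (fun i hi => by rw [hnth1 i hi, hnth2 i hi])]
      exact (ih S' (Finset.erase_ssubset hI₀) hnn').symm
    rw [hrest, ← hins]

theorem stmt2 (S : Finset (ℕ × ℕ)) (hval : ∀ I ∈ S, I.1 ≤ I.2) (hnn : NonNested S) :
    S = (Finset.Icc 1 S.card).image
      (fun i => (nthSmallest (S.image Prod.fst) i, nthSmallest (S.image Prod.snd) i)) := by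
  exact nonNested_aux S hnn
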